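/- Let K_s be an object sampling of K. If X ⊆ M is a passkey in K_s, i.e., X is a key in K_s of minimum cardinality among all keys Y in K_s with Y'_{K_s} = X'_{K_s}, then X is a passkey in K. -/
import Mathlib


def extentOf {G M : Type*} (I : G → M → Prop) (B : Set M) : Set G :=
  {g | ∀ m ∈ B, I g m}

/-- `X` is a key w.r.t. a derivation `ext`: no proper subset has the same
derived object set. -/
def IsKey {G M : Type*} (ext : Set M → Set G) (X : Set M) : Prop :=
  ∀ Y ⊂ X, ext Y ≠ ext X

/-- `X` is a passkey: a key of minimum cardinality among all keys with the
same derived object set. -/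
def IsPasskey {G M : Type*} (ext : Set M → Set G) (X : Set M) : Prop :=
  IsKey ext X ∧ ∀ Z : Set M, IsKey ext Z → ext Z = ext X → X.ncard ≤ Z.ncard

lemma exists_key_subset {G M : Type*} [Finite M] (ext : Set M → Set G) (Z : Set M) :
    ∃ Z0 ⊆ Z, IsKey ext Z0 ∧ ext Z0 = ext Z ∧ Z0.ncard ≤ Z.ncard := by
  set S : Set ℕ := {n | ∃ W, W ⊆ Z ∧ ext W = ext Z ∧ W.ncard = n} with hSdef
  have hS : Z.ncard ∈ S := ⟨Z, subset_rfl, rfl, rfl⟩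
  obtain ⟨W, hWZ, hWe, hWn⟩ := Nat.sInf_mem ⟨_, hS⟩
  refine ⟨W, hWZ, ?_, hWe, ?_⟩
  · intro Y hY h
    have hYZ : Y ⊆ Z := hY.1.trans hWZ
    have hYS : Y.ncard ∈ S := ⟨Y, hYZ, by rw [h, hWe], rfl⟩
    have h1 : sInf S ≤ Y.ncard := Nat.sInf_le hYS
    have h2 : Y.ncard < W.ncard := Set.ncard_lt_ncard hY (Set.toFinite W)
    omega
  · rw [hWn]; exact Nat.sInf_le hS

/-- If `X` is a passkey in an object sampling `K_s` (where
`Y'_{K_s} = Y'_K ∩ Gs`), then `X` is a passkey in the whole context `K`. -/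
theorem passkey_in_sample_passkey_in_whole {G M : Type*} [Finite M]
    (I : G → M → Prop) (Gs : Set G) (X : Set M)
    (hpk_s : IsPasskey (fun Y => extentOf I Y ∩ Gs) X) :
    IsPasskey (fun Y => extentOf I Y) X := by
  obtain ⟨hkey, hmin⟩ := hpk_s
  constructor
  · intro Y hY h
    exact hkey Y hY (by simp only at h ⊢; rw [h])
  · intro Z _ hZX
    simp only at hZX
    obtain ⟨Z0, _, hZ0key, hZ0e, hZ0n⟩ :=
      exists_key_subset (fun Y => extentOf I Y ∩ Gs) Z
    have : X.ncard ≤ Z0.ncard := hmin Z0 hZ0key (by simp only at hZ0e ⊢; rw [hZ0e, hZX])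
    omega
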